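/- Let G be a finite group, ψ : G → ℂ positive definite with ψ(1) = 1 and |ψ(g)| ≤ 1 for all g, and suppose that the set A := { k ∈ G : |1 - ψ(k)| < δ } satisfies |A| ≥ (2/3)|G|. Then every h ∈ G can be written h = k₁k₂ with k₁, k₂ ∈ A, and consequently |1 - ψ(h)| ≤ δ + √(2δ) for all h ∈ G. -/

import Mathlib

open scoped Classical

/-- Let `G` be a finite group and `ψ : G → ℂ` with `ψ(1) = 1`, `|ψ| ≤ 1`, obeying
the positive-definiteness inequality `|ψ(g) - ψ(h)|² ≤ 2(1 - Re ψ(g⁻¹h))`.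
If the set `A = {k : |1 - ψ(k)| < δ}` has `|A| ≥ (2/3)|G|`, then every `h ∈ G` is
a product of two elements of `A`, and `|1 - ψ(h)| ≤ δ + √(2δ)` for all `h`. -/
theorem posdef_large_set_spreads {G : Type*} [Group G] [Fintype G]
    (ψ : G → ℂ) (δ : ℝ) (hδ : 0 < δ)
    (h1 : ψ 1 = 1) (hbd : ∀ g : G, ‖ψ g‖ ≤ 1)
    (hineq : ∀ g h : G,
      ‖ψ g - ψ h‖ ^ 2 ≤ 2 * (1 - (ψ (g⁻¹ * h)).re))
    (hA : (2 : ℝ) / 3 * Fintype.card G ≤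
      (Finset.univ.filter (fun k : G => ‖1 - ψ k‖ < δ)).card) :
    (∀ h : G, ∃ k₁ k₂ : G, ‖1 - ψ k₁‖ < δ ∧
        ‖1 - ψ k₂‖ < δ ∧ h = k₁ * k₂) ∧
    ∀ h : G, ‖1 - ψ h‖ ≤ δ + Real.sqrt (2 * δ) := by
  set A : Finset G := Finset.univ.filter (fun k : G => ‖1 - ψ k‖ < δ) with hAdef
  have hcardG : (0 : ℕ) < Fintype.card G := Fintype.card_pos
  have key : ∀ h : G, ∃ k₁ k₂ : G, ‖1 - ψ k₁‖ < δ ∧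
      ‖1 - ψ k₂‖ < δ ∧ h = k₁ * k₂ := by
    intro h
    have hinj : Function.Injective (fun a : G => h * a⁻¹) := by
      intro a b hab
      simpa using hab
    set B : Finset G := A.image (fun a : G => h * a⁻¹) with hBdef
    have hBcard : B.card = A.card := Finset.card_image_of_injective _ hinj
    have hbig : Fintype.card G < A.card + B.card := by
      rw [hBcard]
      have h23 : (2 : ℝ) / 3 * Fintype.card G ≤ (A.card : ℝ) := hA
      have : (Fintype.card G : ℝ) < (A.card : ℝ) + (A.card : ℝ) := by
        have hpos : (0 : ℝ) < (Fintype.card G : ℝ) := by exact_mod_cast hcardG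
        nlinarith
      exact_mod_cast this
    have hnon : (A ∩ B).Nonempty := by
      by_contra hcon
      rw [Finset.not_nonempty_iff_eq_empty] at hcon
      have := Finset.card_union_of_disjoint (Finset.disjoint_iff_inter_eq_empty.2 hcon)
      have hle : (A ∪ B).card ≤ Fintype.card G := by
        simpa using (Finset.card_le_univ (A ∪ B))
      omega
    obtain ⟨k₁, hk₁⟩ := hnon
    rw [Finset.mem_inter] at hk₁
    obtain ⟨hk₁A, hk₁B⟩ := hk₁
    rw [hBdef, Finset.mem_image] at hk₁B
    obtain ⟨k₂, hk₂A, hk₂eq⟩ := hk₁B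
    refine ⟨k₁, k₂, ?_, ?_, ?_⟩
    · simpa [hAdef] using hk₁A
    · simpa [hAdef] using hk₂A
    · rw [← hk₂eq]; group
  refine ⟨key, fun h => ?_⟩
  obtain ⟨k₁, k₂, hk₁, hk₂, hprod⟩ := key h
  have step : ‖ψ k₁ - ψ h‖ ≤ Real.sqrt (2 * δ) := by
    have h2 : ‖ψ k₁ - ψ h‖ ^ 2 ≤ 2 * (1 - (ψ (k₁⁻¹ * h)).re) := hineq k₁ h
    have hk : k₁⁻¹ * h = k₂ := by rw [hprod]; group
    have hre : 1 - (ψ k₂).re ≤ ‖1 - ψ k₂‖ := by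
      have := Complex.re_le_norm (1 - ψ k₂)
      simpa using this
    have h3 : ‖ψ k₁ - ψ h‖ ^ 2 ≤ 2 * δ := by
      rw [hk] at h2
      nlinarith
    have := Real.sqrt_le_sqrt h3
    rwa [Real.sqrt_sq (norm_nonneg _)] at this
  calc ‖1 - ψ h‖ = ‖(1 - ψ k₁) + (ψ k₁ - ψ h)‖ := by ring_nf
    _ ≤ ‖1 - ψ k₁‖ + ‖ψ k₁ - ψ h‖ := norm_add_le _ _
    _ ≤ δ + Real.sqrt (2 * δ) := add_le_add hk₁.le step
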